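/- Suppose ε > 0, S_i ⊆ W_i for every i ∈ {1,…,k}, each set U_i induces a connected subgraph of T, and W_1 induces a connected subgraph of T. Let xy be an edge of T with x ∈ W_1 and y ∈ U_1 \ W_1, and let I' be the instance obtained from I by expanding the edge xy by ε. Then res(I') ≥ res(I). -/

import Mathlib

open SimpleGraph

lemma myIsPath_concat {V : Type*} {G : SimpleGraph V} {a b c : V} {p : G.Walk a b}
    (hp : p.IsPath) (h : G.Adj b c) (hc : c ∉ p.support) : (p.concat h).IsPath := by
  rw [Walk.isPath_def, Walk.support_concat]
  simp [List.concat_eq_append, List.nodup_append, hp.support_nodup, hc]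
  exact fun a ha hac => hc (hac ▸ ha)

lemma myPathInSet {V : Type*} {G : SimpleGraph V} {s : Set V}
    (hconn : (G.induce s).Connected) {a b : V} (ha : a ∈ s) (hb : b ∈ s) :
    ∃ p : G.Walk a b, p.IsPath ∧ ∀ v ∈ p.support, v ∈ s := by
  classical
  obtain ⟨q⟩ := hconn.preconnected ⟨a, ha⟩ ⟨b, hb⟩
  refine ⟨(q.map (Embedding.induce s).toHom).bypass, Walk.bypass_isPath _, ?_⟩
  intro v hv
  have := Walk.support_bypass_subset _ hv
  erw [Walk.support_map] at this
  obtain ⟨⟨u, hu⟩, _, rfl⟩ := List.mem_map.1 this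
  exact hu



/-- Expanding an edge `xy` (with `x ∈ W₁`, `y ∈ U₁ \ W₁`) of a tree instance of the
Generalized Graphic Inverse Voronoi problem by `ε > 0` does not decrease the resolution:
`res(I') ≥ res(I)`.  The resolution is formalized as the infimum in `EReal` of the set of
positive differences `d(sᵢ,u) − d(sⱼ,u)` with `u ∈ Uᵢ ∩ Uⱼ`, `sᵢ ∈ Sᵢ`, `sⱼ ∈ Sⱼ`
(so that the infimum of the empty set is `+∞`, matching the convention `min ∅ = +∞`).

The expanded tree `T'` lives on `V ⊕ Unit`, where `Sum.inr ()` is the subdivision vertex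
`y'`; the edge `xy'` keeps the length of `xy` and the new edge `yy'` has length `ε`.
`U'₁` consists of `y'` together with the vertices of `U₁` in the component of `T − y`
containing `x` (those `u` whose path to `x` avoids `y`); all other data is unchanged. -/
theorem expansion_resolution_mono
    {V : Type*} [Fintype V] (T : SimpleGraph V) (hT : T.IsTree)
    (w : Sym2 V → ℝ) (hw : ∀ e ∈ T.edgeSet, 0 < w e)
    (d : V → V → ℝ)
    (hd : ∀ (u v : V) (p : T.Walk u v), p.IsPath → (p.edges.map w).sum = d u v)
    (k : ℕ) (U S : Fin k → Set V)
    (hcover : (⋃ i, U i) = Set.univ)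
    (hSW : ∀ i, S i ⊆ U i \ ⋃ (j) (_ : j ≠ i), U j)
    (hUconn : ∀ i, (T.induce (U i)).Connected)
    (i₀ : Fin k)
    (hWconn : (T.induce (U i₀ \ ⋃ (j) (_ : j ≠ i₀), U j)).Connected)
    (x y : V) (hxy : T.Adj x y)
    (hx : x ∈ U i₀ \ ⋃ (j) (_ : j ≠ i₀), U j)
    (hyU : y ∈ U i₀) (hyW : y ∉ U i₀ \ ⋃ (j) (_ : j ≠ i₀), U j)
    (ε : ℝ) (hε : 0 < ε)
    -- the expanded tree `T'`
    (T' : SimpleGraph (V ⊕ Unit))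
    (hT'adj : ∀ a b : V ⊕ Unit, T'.Adj a b ↔
      ((∃ u v : V, a = Sum.inl u ∧ b = Sum.inl v ∧ T.Adj u v ∧ s(u, v) ≠ s(x, y)) ∨
        (a = Sum.inl x ∧ b = Sum.inr ()) ∨ (a = Sum.inr () ∧ b = Sum.inl x) ∨
        (a = Sum.inl y ∧ b = Sum.inr ()) ∨ (a = Sum.inr () ∧ b = Sum.inl y)))
    -- its edge-lengths
    (w' : Sym2 (V ⊕ Unit) → ℝ)
    (hw'old : ∀ u v : V, w' s(Sum.inl u, Sum.inl v) = w s(u, v))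
    (hw'x : w' s(Sum.inl x, Sum.inr ()) = w s(x, y))
    (hw'y : w' s(Sum.inl y, Sum.inr ()) = ε)
    -- its tree distance
    (d' : V ⊕ Unit → V ⊕ Unit → ℝ)
    (hd' : ∀ (a b : V ⊕ Unit) (p : T'.Walk a b), p.IsPath → (p.edges.map w').sum = d' a b)
    -- the modified cell `U'₁` and the cells of the expanded instance
    (U₁' : Set (V ⊕ Unit))
    (hU₁' : U₁' = {Sum.inr ()} ∪
      Sum.inl '' {u | u ∈ U i₀ ∧ ∀ p : T.Walk u x, p.IsPath → y ∉ p.support})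
    (U' : Fin k → Set (V ⊕ Unit))
    (hU' : ∀ i, U' i = if i = i₀ then U₁' else (Sum.inl '' U i : Set (V ⊕ Unit))) :
    sInf {r : EReal | ∃ (i j : Fin k) (u si sj : V),
        u ∈ U i ∧ u ∈ U j ∧ si ∈ S i ∧ sj ∈ S j ∧
        0 < d si u - d sj u ∧ r = ((d si u - d sj u : ℝ) : EReal)} ≤
      sInf {r : EReal | ∃ (i j : Fin k) (a si sj : V ⊕ Unit),
        a ∈ U' i ∧ a ∈ U' j ∧ si ∈ (Sum.inl '' S i : Set (V ⊕ Unit)) ∧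
        sj ∈ (Sum.inl '' S j : Set (V ⊕ Unit)) ∧
        0 < d' si a - d' sj a ∧ r = ((d' si a - d' sj a : ℝ) : EReal)} := by
  classical
  -- the graph with the edge xy deleted, and its embedding into T'
  set G : SimpleGraph V := T.deleteEdges {s(x, y)} with hG
  have fadj : ∀ {u v : V}, G.Adj u v → T'.Adj (Sum.inl u) (Sum.inl v) := by
    intro u v huv
    rw [deleteEdges_adj] at huv
    rw [hT'adj]
    exact Or.inl ⟨u, v, rfl, rfl, huv.1, by simpa using huv.2⟩
  let f : G →g T' := ⟨Sum.inl, fadj⟩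
  have hw'e : ∀ e : Sym2 V, w' (e.map Sum.inl) = w e := by
    intro e
    induction e using Sym2.ind with
    | _ u v => rw [Sym2.map_pair_eq]; exact hw'old u v
  -- mapping a path of T avoiding edge xy into T'
  have key : ∀ {a b : V} (p : T.Walk a b), p.IsPath → s(x, y) ∉ p.edges →
      ∃ q : T'.Walk (Sum.inl a) (Sum.inl b), q.IsPath ∧
        q.support = p.support.map Sum.inl ∧
        (q.edges.map w').sum = (p.edges.map w).sum := by
    intro a b p hp he
    have hsub : ∀ e ∈ p.edges, e ∈ G.edgeSet := by
      intro e hep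
      rw [hG, edgeSet_deleteEdges]
      refine ⟨p.edges_subset_edgeSet hep, ?_⟩
      simp only [Set.mem_singleton_iff]
      rintro rfl; exact he hep
    refine ⟨(p.transfer G hsub).map f,
      Walk.map_isPath_of_injective Sum.inl_injective (hp.transfer hsub), ?_, ?_⟩
    · rw [Walk.support_map, Walk.support_transfer]; rfl
    · rw [Walk.edges_map, Walk.edges_transfer, List.map_map]
      congr 1
      exact List.map_congr_left fun e _ => hw'e e
  have hxnot : ∀ i : Fin k, i ≠ i₀ → x ∉ U i := by
    intro i hi hxi
    exact hx.2 (Set.mem_iUnion₂.2 ⟨i, hi, hxi⟩)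
  -- main distance-transfer lemma for old vertices
  have main : ∀ (i : Fin k) (s u : V), s ∈ S i → Sum.inl u ∈ U' i →
      u ∈ U i ∧ d' (Sum.inl s) (Sum.inl u) = d s u := by
    intro i s u hs hu
    rw [hU' i] at hu
    by_cases hi : i = i₀
    · subst hi
      rw [if_pos rfl, hU₁'] at hu
      rcases hu with hu | hu
      · simp at hu
      obtain ⟨u', hu', huu⟩ := hu
      obtain rfl : u = u' := (Sum.inl_injective huu).symm
      refine ⟨hu'.1, ?_⟩
      have hsW := hSW i hs
      obtain ⟨ps, hps, hpssub⟩ := myPathInSet hWconn hsW hx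
      have hyps : y ∉ ps.support := fun h => hyW (hpssub y h)
      -- a path from u to x; it avoids y by assumption
      obtain ⟨q0⟩ := hT.isConnected.preconnected u x
      have hpu : q0.bypass.IsPath := Walk.bypass_isPath q0
      have hyu : y ∉ q0.bypass.support := hu'.2 q0.bypass hpu
      -- combine into a path from s to u avoiding y
      set c := (ps.append q0.bypass.reverse).bypass with hc
      have hcp : c.IsPath := Walk.bypass_isPath _
      have hyc : y ∉ c.support := by
        intro h
        have := Walk.support_bypass_subset _ h
        rw [Walk.mem_support_append_iff] at this
        rcases this with h1 | h1
        · exact hyps h1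
        · rw [Walk.support_reverse, List.mem_reverse] at h1; exact hyu h1
      have hce : s(x, y) ∉ c.edges := fun h => hyc (c.snd_mem_support_of_mem_edges h)
      obtain ⟨q, hq, _, hsum⟩ := key c hcp hce
      rw [← hd' _ _ q hq, hsum, hd _ _ c hcp]
    · rw [if_neg hi] at hu
      obtain ⟨u', hu', huu⟩ := hu
      obtain rfl : u = u' := (Sum.inl_injective huu).symm
      refine ⟨hu', ?_⟩
      have hsU : s ∈ U i := (hSW i hs).1
      obtain ⟨p, hp, hsub⟩ := myPathInSet (hUconn i) hsU hu'
      have hxp : x ∉ p.support := fun h => hxnot i hi (hsub x h)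
      have hpe : s(x, y) ∉ p.edges := fun h => hxp (p.fst_mem_support_of_mem_edges h)
      obtain ⟨q, hq, _, hsum⟩ := key p hp hpe
      rw [← hd' _ _ q hq, hsum, hd _ _ p hp]
  -- distance from a site of S i₀ to the subdivision vertex
  have main2 : ∀ s ∈ S i₀, d' (Sum.inl s) (Sum.inr ()) = d s y := by
    intro s hs
    have hsW := hSW i₀ hs
    obtain ⟨ps, hps, hsub⟩ := myPathInSet hWconn hsW hx
    have hyps : y ∉ ps.support := fun h => hyW (hsub y h)
    have hpe : s(x, y) ∉ ps.edges := fun h => hyps (ps.snd_mem_support_of_mem_edges h)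
    obtain ⟨q, hq, hqsup, hqsum⟩ := key ps hps hpe
    have hadj' : T'.Adj (Sum.inl x) (Sum.inr ()) :=
      (hT'adj _ _).2 (Or.inr (Or.inl ⟨rfl, rfl⟩))
    have hnr : (Sum.inr () : V ⊕ Unit) ∉ q.support := by
      rw [hqsup]; simp
    have hq' : (q.concat hadj').IsPath := myIsPath_concat hq hadj' hnr
    have hsum' : ((q.concat hadj').edges.map w').sum = (ps.edges.map w).sum + w s(x, y) := by
      simp [Walk.edges_concat, hqsum, hw'x]
    have hpsy : (ps.concat hxy).IsPath := myIsPath_concat hps hxy hyps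
    have hdsy : d s y = (ps.edges.map w).sum + w s(x, y) := by
      rw [← hd _ _ (ps.concat hxy) hpsy]
      simp [Walk.edges_concat]
    rw [← hd' _ _ (q.concat hadj') hq', hsum', hdsy]
  -- conclude by set inclusion
  apply sInf_le_sInf
  rintro r ⟨i, j, a, si', sj', hai, haj, ⟨si, hsi, rfl⟩, ⟨sj, hsj, rfl⟩, hpos, rfl⟩
  cases a with
  | inl u =>
    obtain ⟨hui, hdi⟩ := main i si u hsi hai
    obtain ⟨huj, hdj⟩ := main j sj u hsj haj
    rw [hdi, hdj] at hpos ⊢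
    exact ⟨i, j, u, si, sj, hui, huj, hsi, hsj, hpos, rfl⟩
  | inr t =>
    obtain ⟨⟩ := t
    have hii : i = i₀ := by
      by_contra h
      rw [hU' i, if_neg h] at hai
      obtain ⟨u, _, hu⟩ := hai
      exact absurd hu (by simp)
    have hjj : j = i₀ := by
      by_contra h
      rw [hU' j, if_neg h] at haj
      obtain ⟨u, _, hu⟩ := haj
      exact absurd hu (by simp)
    rw [hii] at hsi hai
    rw [hjj] at hsj haj
    rw [main2 si hsi, main2 sj hsj] at hpos ⊢
    exact ⟨i₀, i₀, y, si, sj, hyU, hyU, hsi, hsj, hpos, rfl⟩
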